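/- Let a, b ∈ (0, 1/2) with b > a/(1+a), and let ε > 0 be small enough that (1/2)log((1+a)+ε) + (1/2)log((1−b)+ε) < 0. Then for Lebesgue-almost every x ∈ [0,1] with respect to the doubling map f(x) = 2x mod 1, there exists δ(x) > 0 such that for all y₀ ∈ (0, δ(x)), the fiber orbit y_n = g^n_{a,b,x}(y₀) converges to 0. -/

import Mathlib

open MeasureTheory Filter

/-- The doubling map f(x) = 2x mod 1. -/
noncomputable def doubling (x : ℝ) : ℝ := Int.fract (2 * x)

/-- The fiber map of the skew product F_{a,b}. -/
noncomputable def fiberMap (a b x y : ℝ) : ℝ :=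
  if x < 1/2 then y + a * y * (1 - y) else y - b * y * (1 - y)

/-! ### Auxiliary definitions -/

/-- A two-valued weight depending on which half of `[0,1)` the point lies in. -/
noncomputable def ddPhi (p q x : ℝ) : ℝ := if x < 1/2 then p else q

/-- Product of the weights along the doubling orbit. -/
noncomputable def ddProd (p q : ℝ) (n : ℕ) (x : ℝ) : ℝ :=
  ∏ k ∈ Finset.range n, ddPhi p q (doubling^[k] x)

/-- Birkhoff sum of the weights along the doubling orbit. -/
noncomputable def ddS (LA LB : ℝ) (n : ℕ) (x : ℝ) : ℝ :=
  ∑ k ∈ Finset.range n, ddPhi LA LB (doubling^[k] x)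

lemma measurable_doubling : Measurable doubling :=
  measurable_fract.comp (measurable_id.const_mul 2)

lemma measurable_ddPhi (p q : ℝ) : Measurable (ddPhi p q) :=
  Measurable.ite (measurableSet_lt measurable_id measurable_const)
    measurable_const measurable_const

lemma measurable_ddProd (p q : ℝ) (n : ℕ) : Measurable (ddProd p q n) := by
  apply Finset.measurable_prod
  intro k _
  exact (measurable_ddPhi p q).comp (measurable_doubling.iterate k)

lemma ddPhi_pos {p q : ℝ} (hp : 0 < p) (hq : 0 < q) (x : ℝ) : 0 < ddPhi p q x := by
  unfold ddPhi; split <;> assumption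

lemma ddPhi_le {p q : ℝ} (x : ℝ) : ddPhi p q x ≤ max p q := by
  unfold ddPhi; split
  · exact le_max_left _ _
  · exact le_max_right _ _

lemma ddProd_pos {p q : ℝ} (hp : 0 < p) (hq : 0 < q) (n : ℕ) (x : ℝ) :
    0 < ddProd p q n x :=
  Finset.prod_pos fun _ _ => ddPhi_pos hp hq _

lemma ddProd_le {p q : ℝ} (hp : 0 < p) (hq : 0 < q) (n : ℕ) (x : ℝ) :
    ddProd p q n x ≤ (max p q) ^ n := by
  calc ddProd p q n x ≤ ∏ _k ∈ Finset.range n, max p q :=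
      Finset.prod_le_prod (fun k _ => (ddPhi_pos hp hq _).le) (fun k _ => ddPhi_le _)
    _ = (max p q) ^ n := by rw [Finset.prod_const, Finset.card_range]

lemma ddProd_succ (p q : ℝ) (n : ℕ) (x : ℝ) :
    ddProd p q (n + 1) x = ddProd p q n (doubling x) * ddPhi p q x := by
  unfold ddProd
  rw [Finset.prod_range_succ']
  rfl

lemma ae_ne_real (c : ℝ) : ∀ᵐ x : ℝ, x ≠ c := by
  refine MeasureTheory.ae_iff.mpr ?_; simp

lemma intervalIntegrable_of_bounded {f : ℝ → ℝ} (hf : Measurable f) (C : ℝ)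
    (hC : ∀ x, |f x| ≤ C) (a b : ℝ) : IntervalIntegrable f volume a b := by
  rw [intervalIntegrable_iff]
  refine Integrable.mono' (g := fun _ => C) ?_ hf.aestronglyMeasurable ?_
  · refine (MeasureTheory.integrableOn_const_iff).mpr (Or.inr ?_)
    rw [Set.uIoc]
    exact measure_Ioc_lt_top
  · exact Filter.Eventually.of_forall fun x => by simpa using hC x

/-- Key integral recursion: the integral of the product of weights. -/
lemma ddProd_integral {p q : ℝ} (hp : 0 < p) (hq : 0 < q) (n : ℕ) :
    ∫ x in (0:ℝ)..1, ddProd p q n x = ((p + q) / 2) ^ n := by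
  induction n with
  | zero => simp [ddProd]
  | succ n ih =>
    have hint : ∀ a b : ℝ,
        IntervalIntegrable (fun x => ddProd p q n (doubling x) * ddPhi p q x) volume a b := by
      intro a b
      refine intervalIntegrable_of_bounded
        (f := fun x => ddProd p q n (doubling x) * ddPhi p q x)
        (((measurable_ddProd p q n).comp measurable_doubling).mul (measurable_ddPhi p q))
        ((max p q)^n * max p q) (fun x => ?_) a b
      rw [abs_mul]
      have h1 := ddProd_pos hp hq n (doubling x)
      have h2 := ddPhi_pos hp hq x
      rw [abs_of_pos h1, abs_of_pos h2]
      exact mul_le_mul (ddProd_le hp hq n _) (ddPhi_le x) h2.le (by positivity)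
    have hsplit :
        (∫ x in (0:ℝ)..(1/2), ddProd p q n (doubling x) * ddPhi p q x)
        + (∫ x in (1/2:ℝ)..1, ddProd p q n (doubling x) * ddPhi p q x)
        = ∫ x in (0:ℝ)..1, ddProd p q n (doubling x) * ddPhi p q x :=
      intervalIntegral.integral_add_adjacent_intervals (hint 0 (1/2)) (hint (1/2) 1)
    have hcongr : (∫ x in (0:ℝ)..1, ddProd p q (n+1) x)
        = ∫ x in (0:ℝ)..1, ddProd p q n (doubling x) * ddPhi p q x := by
      apply intervalIntegral.integral_congr
      intro x _
      exact ddProd_succ p q n x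
    have hlow : (∫ x in (0:ℝ)..(1/2), ddProd p q n (doubling x) * ddPhi p q x)
        = ∫ x in (0:ℝ)..(1/2), p * ddProd p q n (2 * x) := by
      apply intervalIntegral.integral_congr_ae
      filter_upwards [ae_ne_real (1/2)] with x hx hmem
      rw [Set.uIoc_of_le (by norm_num : (0:ℝ) ≤ 1/2)] at hmem
      obtain ⟨h0, h1⟩ := hmem
      have hx2 : x < 1/2 := lt_of_le_of_ne h1 hx
      have hd : doubling x = 2 * x := by
        unfold doubling
        exact Int.fract_eq_self.2 ⟨by linarith, by linarith⟩
      rw [hd, ddPhi, if_pos hx2, mul_comm]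
    have hhigh : (∫ x in (1/2:ℝ)..1, ddProd p q n (doubling x) * ddPhi p q x)
        = ∫ x in (1/2:ℝ)..1, q * ddProd p q n (2 * x - 1) := by
      apply intervalIntegral.integral_congr_ae
      filter_upwards [ae_ne_real 1] with x hx hmem
      rw [Set.uIoc_of_le (by norm_num : (1/2:ℝ) ≤ 1)] at hmem
      obtain ⟨h0, h1⟩ := hmem
      have hx1 : x < 1 := lt_of_le_of_ne h1 hx
      have hd : doubling x = 2 * x - 1 := by
        unfold doubling
        have : Int.fract (2 * x) = Int.fract (2 * x - (1:ℤ)) := (Int.fract_sub_intCast _ _).symm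
        rw [this]
        push_cast
        exact Int.fract_eq_self.2 ⟨by linarith, by linarith⟩
      rw [hd, ddPhi, if_neg (by push_neg; linarith), mul_comm]
    have hcl : (∫ x in (0:ℝ)..(1/2), ddProd p q n (2 * x))
        = (2⁻¹:ℝ) * ∫ x in (0:ℝ)..1, ddProd p q n x := by
      have h := intervalIntegral.integral_comp_mul_left (a := (0:ℝ)) (b := 1/2) (c := 2)
        (fun x => ddProd p q n x) (two_ne_zero)
      norm_num [smul_eq_mul] at h
      convert h using 2 <;> norm_num
    have hch : (∫ x in (1/2:ℝ)..1, ddProd p q n (2 * x - 1))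
        = (2⁻¹:ℝ) * ∫ x in (0:ℝ)..1, ddProd p q n x := by
      have h := intervalIntegral.integral_comp_mul_sub (a := (1/2:ℝ)) (b := 1) (c := 2)
        (fun x => ddProd p q n x) (two_ne_zero) 1
      norm_num [smul_eq_mul] at h
      convert h using 2 <;> norm_num
    calc (∫ x in (0:ℝ)..1, ddProd p q (n+1) x)
        = (∫ x in (0:ℝ)..(1/2), ddProd p q n (doubling x) * ddPhi p q x)
          + (∫ x in (1/2:ℝ)..1, ddProd p q n (doubling x) * ddPhi p q x) := by
          rw [hcongr, ← hsplit]
      _ = p * ((2⁻¹:ℝ) * ∫ x in (0:ℝ)..1, ddProd p q n x)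
          + q * ((2⁻¹:ℝ) * ∫ x in (0:ℝ)..1, ddProd p q n x) := by
          rw [hlow, hhigh, intervalIntegral.integral_const_mul,
            intervalIntegral.integral_const_mul, hcl, hch]
      _ = ((p + q) / 2) ^ (n + 1) := by
          rw [ih]; ring

lemma dd_exp_le {u : ℝ} (h : |u| ≤ 1) : Real.exp u ≤ 1 + u + u ^ 2 := by
  have h1 := Real.exp_bound h (n := 2) (by norm_num)
  have h2 : |Real.exp u - (1 + u)| ≤ |u| ^ 2 * (3 / 4) := by
    convert h1 using 2
    · simp [Finset.sum_range_succ]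
    · norm_num
  have h3 := abs_le.1 h2
  nlinarith [sq_abs u, sq_nonneg u]

lemma dd_exp_eq (s LA LB : ℝ) (n : ℕ) (x : ℝ) :
    Real.exp (s * ddS LA LB n x)
      = ddProd (Real.exp (s * LA)) (Real.exp (s * LB)) n x := by
  unfold ddS ddProd
  rw [Finset.mul_sum, Real.exp_sum]
  refine Finset.prod_congr rfl fun k _ => ?_
  unfold ddPhi
  split_ifs <;> rfl

/-- Borel–Cantelli / Chernoff: almost every point has eventually small Birkhoff sums. -/
lemma dd_bc {LA LB : ℝ} (hLA : 0 < LA) (hLB : LB < 0) (hL : LA + LB < 0) :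
    ∃ c > 0, ∀ᵐ x ∂(volume.restrict (Set.Icc (0:ℝ) 1)),
      ∀ᶠ n in atTop, ddS LA LB n x ≤ -(c * n) := by
  set K : ℝ := LA ^ 2 + LB ^ 2 with hKdef
  have hK : 0 < K := by positivity
  set s : ℝ := min (-(LA + LB) / (4 * K)) (min (1 / (1 + LA)) (1 / (1 - LB))) with hsdef
  have hs : 0 < s := by
    refine lt_min (div_pos (by linarith) (by positivity))
      (lt_min (by positivity) (div_pos one_pos (by linarith)))
  have hs1 : |s * LA| ≤ 1 := by
    rw [abs_of_nonneg (by positivity)]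
    have h1 : s ≤ 1 / (1 + LA) := le_trans (min_le_right _ _) (min_le_left _ _)
    have : s * LA ≤ (1 / (1 + LA)) * LA := mul_le_mul_of_nonneg_right h1 hLA.le
    have h2 : (1 / (1 + LA)) * LA ≤ 1 := by
      rw [div_mul_eq_mul_div, one_mul, div_le_one (by linarith)]; linarith
    linarith
  have hs2 : |s * LB| ≤ 1 := by
    have hnn : s * LB ≤ 0 := mul_nonpos_of_nonneg_of_nonpos hs.le hLB.le
    rw [abs_of_nonpos hnn]
    have h1 : s ≤ 1 / (1 - LB) := le_trans (min_le_right _ _) (min_le_right _ _)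
    have h3 : s * (-LB) ≤ (1 / (1 - LB)) * (-LB) := mul_le_mul_of_nonneg_right h1 (by linarith)
    have h4 : (1 / (1 - LB)) * (-LB) ≤ 1 := by
      rw [div_mul_eq_mul_div, one_mul, div_le_one (by linarith)]; linarith
    linarith
  have hsK : s * K ≤ -(LA + LB) / 4 := by
    have h1 : s ≤ -(LA + LB) / (4 * K) := min_le_left _ _
    have := mul_le_mul_of_nonneg_right h1 hK.le
    rw [div_mul_eq_mul_div] at this
    calc s * K ≤ -(LA + LB) * K / (4 * K) := this
      _ = -(LA + LB) / 4 := by field_simp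
  set p : ℝ := Real.exp (s * LA) with hpdef
  set q : ℝ := Real.exp (s * LB) with hqdef
  have hp : 0 < p := Real.exp_pos _
  have hq : 0 < q := Real.exp_pos _
  set ρ : ℝ := 1 + s * (LA + LB) / 4 with hρdef
  have hpq : (p + q) / 2 ≤ ρ := by
    have e1 := dd_exp_le hs1
    have e2 := dd_exp_le hs2
    have hss : s * s * K ≤ s * (-(LA + LB) / 4) :=
      by calc s * s * K = s * (s * K) := by ring
        _ ≤ s * (-(LA + LB) / 4) := mul_le_mul_of_nonneg_left hsK hs.le
    nlinarith [sq_nonneg (s * LA), sq_nonneg (s * LB)]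
  have hsLneg : s * (LA + LB) < 0 := mul_neg_of_pos_of_neg hs hL
  have hρ1 : ρ < 1 := by rw [hρdef]; linarith
  have hρ0 : 0 < ρ := by
    have h1 : s ≤ 1 / (1 - LB) := le_trans (min_le_right _ _) (min_le_right _ _)
    have h2 : s * (-(LA + LB)) ≤ s * (-LB) := by nlinarith
    have h3 : s * (-LB) ≤ (1 / (1 - LB)) * (-LB) := by nlinarith
    have h4 : (1 / (1 - LB)) * (-LB) < 1 := by
      rw [div_mul_eq_mul_div, one_mul, div_lt_one (by linarith)]; linarith
    rw [hρdef]; nlinarith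
  set σ : ℝ := Real.sqrt ρ with hσdef
  have hρσ : ρ < σ := by rw [hσdef, Real.lt_sqrt hρ0.le]; nlinarith
  have hσ1 : σ < 1 := by
    rw [hσdef, show (1:ℝ) = Real.sqrt 1 by simp]
    exact Real.sqrt_lt_sqrt hρ0.le hρ1
  have hσ0 : 0 < σ := hρ0.trans hρσ
  set c : ℝ := (Real.log σ - Real.log ρ) / s with hcdef
  have hc : 0 < c := div_pos (sub_pos.2 (Real.log_lt_log hρ0 hρσ)) hs
  refine ⟨c, hc, ?_⟩
  set μ := volume.restrict (Set.Icc (0:ℝ) 1) with hμdef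
  set E : ℕ → Set ℝ := fun n => {x | -(c * n) ≤ ddS LA LB n x} with hEdef
  have hexpsc : Real.exp (s * c) = σ / ρ := by
    rw [hcdef, mul_div_cancel₀ _ hs.ne', Real.exp_sub, Real.exp_log hσ0, Real.exp_log hρ0]
  have hEn : ∀ n : ℕ, μ (E n) ≤ ENNReal.ofReal (σ ^ n) := by
    intro n
    have hf_meas := measurable_ddProd p q n
    have hf_int : Integrable (ddProd p q n) μ := by
      refine Integrable.mono' (integrable_const ((max p q) ^ n)) hf_meas.aestronglyMeasurable ?_
      refine Filter.Eventually.of_forall fun y => ?_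
      rw [Real.norm_eq_abs, abs_of_pos (ddProd_pos hp hq n y)]
      exact ddProd_le hp hq n y
    have hi : ∫ y, ddProd p q n y ∂μ = ((p + q) / 2) ^ n := by
      rw [hμdef]
      rw [MeasureTheory.integral_Icc_eq_integral_Ioc,
        ← intervalIntegral.integral_of_le (by norm_num : (0:ℝ) ≤ 1)]
      exact ddProd_integral hp hq n
    have markov := mul_meas_ge_le_integral_of_nonneg
      (Filter.Eventually.of_forall fun y => (ddProd_pos hp hq n y).le) hf_int
      (Real.exp (s * (-(c * n))))
    have hEset : E n = {y | Real.exp (s * (-(c * n))) ≤ ddProd p q n y} := by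
      ext y
      rw [hEdef]
      simp only [Set.mem_setOf_eq]
      rw [← dd_exp_eq s LA LB n y, Real.exp_le_exp]
      exact (mul_le_mul_iff_right₀ hs).symm
    have hIbound : ∫ y, ddProd p q n y ∂μ ≤ ρ ^ n := by
      rw [hi]
      exact pow_le_pow_left₀ (by positivity) hpq n
    have hEE : Real.exp (s * (-(c * n))) * Real.exp (s * (c * n)) = 1 := by
      rw [← Real.exp_add, show s * (-(c * n)) + s * (c * n) = 0 by ring, Real.exp_zero]
    have htR : (μ (E n)).toReal ≤ σ ^ n := by
      have h1 : Real.exp (s * (-(c * n))) * (μ (E n)).toReal ≤ ρ ^ n := by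
        rw [hEset]; exact le_trans markov hIbound
      have h2 : (μ (E n)).toReal ≤ ρ ^ n * Real.exp (s * (c * n)) := by
        calc (μ (E n)).toReal
            = (μ (E n)).toReal * (Real.exp (s * (-(c * n))) * Real.exp (s * (c * n))) := by
              rw [hEE, mul_one]
          _ = (Real.exp (s * (-(c * n))) * (μ (E n)).toReal) * Real.exp (s * (c * n)) := by
              ring
          _ ≤ ρ ^ n * Real.exp (s * (c * n)) :=
              mul_le_mul_of_nonneg_right h1 (Real.exp_pos _).le
      have h3 : ρ ^ n * Real.exp (s * (c * n)) = σ ^ n := by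
        have hh : Real.exp (s * (c * n)) = (σ / ρ) ^ n := by
          rw [show s * (c * n) = (n : ℝ) * (s * c) by ring, Real.exp_nat_mul, hexpsc]
        rw [hh, div_pow, mul_div_cancel₀ _ (by positivity)]
      exact h3 ▸ h2
    rw [← ENNReal.ofReal_toReal (measure_ne_top μ (E n))]
    exact ENNReal.ofReal_le_ofReal htR
  have hsum : (∑' n, μ (E n)) ≠ ⊤ := by
    refine ne_top_of_le_ne_top ?_ (ENNReal.tsum_le_tsum hEn)
    have hh : ∀ n : ℕ, ENNReal.ofReal (σ ^ n) = ENNReal.ofReal σ ^ n :=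
      fun n => ENNReal.ofReal_pow hσ0.le n
    simp_rw [hh]
    rw [ENNReal.tsum_geometric]
    refine ENNReal.inv_ne_top.mpr ?_
    simp [tsub_eq_zero_iff_le, ENNReal.ofReal_lt_one.mpr hσ1, not_le.mpr]
  filter_upwards [MeasureTheory.ae_eventually_notMem hsum] with x hx
  filter_upwards [hx] with n hn
  rw [hEdef] at hn
  simp only [Set.mem_setOf_eq, not_le] at hn
  exact hn.le

set_option maxHeartbeats 1000000 in
/-- Deterministic part: eventually-negative Birkhoff sums force fiber orbits to zero. -/
lemma dd_det {a b ε LA LB : ℝ} (ha : 0 < a) (ha' : a < 1/2) (hb : 0 < b) (hb' : b < 1/2)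
    (hε : 0 < ε) (heLA : Real.exp LA = 1 + a + ε) (heLB : Real.exp LB = 1 - b + ε)
    (hLA0 : 0 < LA) (hLBle : LB ≤ LA)
    {x c : ℝ} (hc : 0 < c)
    (hS : ∀ᶠ n in atTop, ddS LA LB n x ≤ -(c * n)) :
    ∃ δ > 0, ∀ y₀ ∈ Set.Ioo (0:ℝ) δ, ∀ Y : ℕ → ℝ, Y 0 = y₀ →
      (∀ n : ℕ, Y (n + 1) = fiberMap a b (doubling^[n] x) (Y n)) →
      Tendsto Y atTop (nhds 0) := by
  obtain ⟨n₀, hn₀⟩ := eventually_atTop.1 hS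
  set M : ℝ := n₀ * LA with hMdef
  have hM0 : 0 ≤ M := by positivity
  have hSM : ∀ n : ℕ, ddS LA LB n x ≤ M := by
    intro n
    rcases le_or_gt n n₀ with hle | hgt
    · have h1 : ddS LA LB n x ≤ n * LA := by
        unfold ddS
        calc (∑ k ∈ Finset.range n, ddPhi LA LB (doubling^[k] x))
            ≤ ∑ _k ∈ Finset.range n, LA := by
              refine Finset.sum_le_sum fun k _ => ?_
              unfold ddPhi; split
              · exact le_rfl
              · exact hLBle
          _ = n * LA := by rw [Finset.sum_const, Finset.card_range, nsmul_eq_mul]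
      have h2 : (n : ℝ) * LA ≤ n₀ * LA :=
        mul_le_mul_of_nonneg_right (Nat.cast_le.2 hle) hLA0.le
      linarith
    · have := hn₀ n hgt.le
      have hcn : (0:ℝ) ≤ c * n := by positivity
      linarith
  set η : ℝ := min (ε / b) (1/2) with hηdef
  have hη0 : 0 < η := lt_min (div_pos hε hb) (by norm_num)
  have hη1 : η ≤ 1/2 := min_le_right _ _
  have hηb : b * η ≤ ε := by
    have h1 : η ≤ ε / b := min_le_left _ _
    rw [le_div_iff₀ hb] at h1
    linarith [h1]
  set δ : ℝ := η * Real.exp (-M) with hδdef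
  have hδ0 : 0 < δ := by positivity
  have hexpM1 : Real.exp (-M) ≤ 1 := Real.exp_le_one_iff.mpr (by linarith)
  have hδη : δ ≤ η := by
    rw [hδdef]
    nlinarith
  refine ⟨δ, hδ0, ?_⟩
  rintro y₀ ⟨hy0, hyδ⟩ Y hY0 hrec
  have hEM : Real.exp (-M) * Real.exp M = 1 := by
    rw [← Real.exp_add, neg_add_cancel, Real.exp_zero]
  have key : ∀ n : ℕ, 0 < Y n ∧ Y n < 1 ∧ Y n ≤ y₀ * Real.exp (ddS LA LB n x) := by
    intro n
    induction n with
    | zero =>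
      rw [hY0]
      refine ⟨hy0, by linarith, ?_⟩
      have h0 : ddS LA LB 0 x = 0 := by simp [ddS]
      rw [h0, Real.exp_zero, mul_one]
    | succ n ih =>
      obtain ⟨h0, h1, h2⟩ := ih
      have hYη : Y n < η := by
        have e1 : Real.exp (ddS LA LB n x) ≤ Real.exp M := Real.exp_le_exp.2 (hSM n)
        have e2 : Y n ≤ y₀ * Real.exp M := h2.trans (mul_le_mul_of_nonneg_left e1 hy0.le)
        have e3 : y₀ * Real.exp M < δ * Real.exp M :=
          mul_lt_mul_of_pos_right hyδ (Real.exp_pos _)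
        have e4 : δ * Real.exp M = η := by
          rw [hδdef, mul_assoc, hEM, mul_one]
        linarith
      have hSsucc : ddS LA LB (n+1) x
          = ddS LA LB n x + ddPhi LA LB (doubling^[n] x) := by
        unfold ddS
        exact Finset.sum_range_succ _ _
      have hexppos := Real.exp_pos (ddS LA LB n x)
      rw [hrec n]
      unfold fiberMap
      by_cases hcase : doubling^[n] x < 1/2
      · rw [if_pos hcase]
        have haY : (0:ℝ) < 1 - a * Y n := by nlinarith
        refine ⟨by nlinarith [mul_pos (mul_pos ha h0) (sub_pos.2 h1)],
          by nlinarith [mul_pos (sub_pos.2 h1) haY], ?_⟩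
        have hPhi : ddPhi LA LB (doubling^[n] x) = LA := if_pos hcase
        rw [hSsucc, hPhi, Real.exp_add, heLA]
        calc Y n + a * Y n * (1 - Y n) ≤ Y n * (1 + a + ε) := by
              nlinarith [mul_pos hε h0, mul_nonneg (mul_nonneg ha.le h0.le) h0.le]
          _ ≤ (y₀ * Real.exp (ddS LA LB n x)) * (1 + a + ε) :=
              mul_le_mul_of_nonneg_right h2 (by linarith)
          _ = y₀ * (Real.exp (ddS LA LB n x) * (1 + a + ε)) := by ring
      · rw [if_neg hcase]
        have hbu : b * Y n ≤ ε := by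
          have := mul_le_mul_of_nonneg_left hYη.le hb.le
          linarith
        have hf : (0:ℝ) < 1 - b * (1 - Y n) := by
          nlinarith [mul_nonneg hb.le h0.le]
        refine ⟨by nlinarith [mul_pos h0 hf],
          by nlinarith [mul_pos (sub_pos.2 h1) (show (0:ℝ) < 1 + b * Y n by positivity)], ?_⟩
        have hPhi : ddPhi LA LB (doubling^[n] x) = LB := if_neg hcase
        rw [hSsucc, hPhi, Real.exp_add, heLB]
        calc Y n - b * Y n * (1 - Y n) ≤ Y n * (1 - b + ε) := by
              nlinarith [mul_le_mul_of_nonneg_right hbu h0.le]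
          _ ≤ (y₀ * Real.exp (ddS LA LB n x)) * (1 - b + ε) :=
              mul_le_mul_of_nonneg_right h2 (by linarith)
          _ = y₀ * (Real.exp (ddS LA LB n x) * (1 - b + ε)) := by ring
  have hbot : Tendsto (fun n => ddS LA LB n x) atTop atBot := by
    have h2 : Tendsto (fun n : ℕ => -(c * n)) atTop atBot := by
      apply Filter.tendsto_neg_atBot_iff.mpr
      exact Tendsto.const_mul_atTop hc tendsto_natCast_atTop_atTop
    exact tendsto_atBot_mono' atTop hS h2
  have hlim : Tendsto (fun n => y₀ * Real.exp (ddS LA LB n x)) atTop (nhds 0) := by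
    have := (Real.tendsto_exp_atBot.comp hbot).const_mul y₀
    simpa using this
  exact squeeze_zero (fun n => (key n).1.le) (fun n => (key n).2.2) hlim

theorem stmt_11 (a b ε : ℝ) (ha : 0 < a) (ha' : a < 1/2) (hb : 0 < b) (hb' : b < 1/2)
    (hab : b > a / (1 + a)) (hε : 0 < ε)
    (hεsmall : (1/2) * Real.log ((1 + a) + ε) + (1/2) * Real.log ((1 - b) + ε) < 0) :
    ∀ᵐ x ∂(volume.restrict (Set.Icc (0:ℝ) 1)),
      ∃ δ > 0, ∀ y₀ ∈ Set.Ioo (0:ℝ) δ, ∀ Y : ℕ → ℝ, Y 0 = y₀ →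
        (∀ n : ℕ, Y (n + 1) = fiberMap a b (doubling^[n] x) (Y n)) →
        Tendsto Y atTop (nhds 0) := by
  set LA : ℝ := Real.log ((1 + a) + ε) with hLAdef
  set LB : ℝ := Real.log ((1 - b) + ε) with hLBdef
  have hLA0 : 0 < LA := Real.log_pos (by linarith)
  have hL : LA + LB < 0 := by linarith
  have hLB0 : LB < 0 := by linarith
  have heLA : Real.exp LA = 1 + a + ε := Real.exp_log (by linarith)
  have heLB : Real.exp LB = 1 - b + ε := Real.exp_log (by linarith)
  obtain ⟨c, hc, hae⟩ := dd_bc hLA0 hLB0 hL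
  filter_upwards [hae] with x hx
  exact dd_det ha ha' hb hb' hε heLA heLB hLA0 (by linarith) hc hx
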